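/- Let H be a finite connected nontrivial simple graph of order n₂ and let n₁ ≥ 2. Then dim_s(K_{n₁} ⊠ H) = n₂(n₁ − 1) + n₁ · dim_s(H) − (n₁ − 1) · dim_s(H), where K_{n₁} is the complete graph on n₁ vertices. -/

import Mathlib

open SimpleGraph Finset

variable {α β : Type*}

/-- The strong product of two simple graphs: distinct vertices `(a,b)` and `(c,d)` are adjacent
iff (`a = c` or `a ~ c`) and (`b = d` or `b ~ d`). -/
def strongProd (G : SimpleGraph α) (H : SimpleGraph β) : SimpleGraph (α × β) where
  Adj x y := x ≠ y ∧ (x.1 = y.1 ∨ G.Adj x.1 y.1) ∧ (x.2 = y.2 ∨ H.Adj x.2 y.2)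
  symm := by
    constructor
    rintro x y ⟨h1, h2, h3⟩
    exact ⟨h1.symm, h2.imp Eq.symm (fun a => a.symm), h3.imp Eq.symm (fun a => a.symm)⟩
  loopless := ⟨fun x h => h.1 rfl⟩

/-- The Cartesian sum (disjunctive product) of two simple graphs. -/
def cartSum (G : SimpleGraph α) (H : SimpleGraph β) : SimpleGraph (α × β) where
  Adj x y := x ≠ y ∧ (G.Adj x.1 y.1 ∨ H.Adj x.2 y.2)
  symm := by
    constructor
    rintro x y ⟨h1, h2⟩
    exact ⟨h1.symm, h2.imp (fun a => a.symm) (fun a => a.symm)⟩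
  loopless := ⟨fun x h => h.1 rfl⟩

/-- `u` is maximally distant from `v` in `G`. -/
def MaximallyDistantFrom (G : SimpleGraph α) (u v : α) : Prop :=
  ∀ w, G.Adj u w → G.dist v w ≤ G.dist u v

/-- `u` and `v` are mutually maximally distant in `G`. -/
def MutuallyMaximallyDistant (G : SimpleGraph α) (u v : α) : Prop :=
  MaximallyDistantFrom G u v ∧ MaximallyDistantFrom G v u

/-- The strong resolving graph of `G`. -/
def strongResolvingGraph (G : SimpleGraph α) : SimpleGraph α where
  Adj u v := u ≠ v ∧ MutuallyMaximallyDistant G u v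
  symm := ⟨by rintro u v ⟨h1, h2, h3⟩; exact ⟨h1.symm, h3, h2⟩⟩
  loopless := ⟨fun x h => h.1 rfl⟩

/-- A finset of vertices is independent if no two of its (distinct) members are adjacent. -/
def IsIndepFinset (G : SimpleGraph α) (s : Finset α) : Prop :=
  ∀ u ∈ s, ∀ v ∈ s, u ≠ v → ¬ G.Adj u v

/-- The independence number `β(G)`. -/
noncomputable def indepNum (G : SimpleGraph α) [Fintype α] : ℕ :=
  sSup {n | ∃ s : Finset α, IsIndepFinset G s ∧ s.card = n}

/-- `w` strongly resolves `u` and `v` in `G`. -/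
def StronglyResolves (G : SimpleGraph α) (w u v : α) : Prop :=
  G.dist w u = G.dist w v + G.dist v u ∨ G.dist w v = G.dist w u + G.dist u v

/-- A strong metric generator for `G`. -/
def IsStrongMetricGenerator (G : SimpleGraph α) (s : Finset α) : Prop :=
  ∀ u v : α, u ≠ v → ∃ w ∈ s, StronglyResolves G w u v

/-- The strong metric dimension of `G`. -/
noncomputable def sdim (G : SimpleGraph α) [Fintype α] : ℕ :=
  sInf {n | ∃ s : Finset α, IsStrongMetricGenerator G s ∧ s.card = n}

-- AUX START

lemma univ_generator (G : SimpleGraph α) [Fintype α] :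
    IsStrongMetricGenerator G Finset.univ := by
  intro u v _
  exact ⟨u, Finset.mem_univ u, Or.inr (by rw [SimpleGraph.dist_self, Nat.zero_add])⟩

lemma sdim_exists (G : SimpleGraph α) [Fintype α] :
    ∃ s : Finset α, IsStrongMetricGenerator G s ∧ s.card = sdim G := by
  have hne : {n | ∃ s : Finset α, IsStrongMetricGenerator G s ∧ s.card = n}.Nonempty :=
    ⟨Finset.univ.card, Finset.univ, univ_generator G, rfl⟩
  exact Nat.sInf_mem hne

lemma sdim_le (G : SimpleGraph α) [Fintype α] {s : Finset α}
    (hs : IsStrongMetricGenerator G s) : sdim G ≤ s.card :=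
  Nat.sInf_le ⟨s, hs, rfl⟩

section H
variable {H : SimpleGraph β}

lemma exists_md [Fintype β] (hH : H.Connected) (v : β) (u : β) :
    ∃ u', MaximallyDistantFrom H u' v ∧ H.dist v u' = H.dist v u + H.dist u u' := by
  classical
  suffices h : ∀ (m : ℕ) (u : β),
      (univ.filter (fun x => H.dist v u < H.dist v x)).card = m →
      ∃ u', MaximallyDistantFrom H u' v ∧ H.dist v u' = H.dist v u + H.dist u u' from
    h _ u rfl
  intro m
  induction m using Nat.strong_induction_on with
  | _ m ih =>
    intro u hm
    by_cases hmd : MaximallyDistantFrom H u v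
    · exact ⟨u, hmd, by rw [SimpleGraph.dist_self, Nat.add_zero]⟩
    · unfold MaximallyDistantFrom at hmd
      push_neg at hmd
      obtain ⟨w, hadj, hlt⟩ := hmd
      have hc : H.dist u v = H.dist v u := SimpleGraph.dist_comm
      have h1 : H.dist v w ≤ H.dist v u + 1 := by
        have ht := hH.dist_triangle (u := v) (v := u) (w := w)
        have := SimpleGraph.dist_eq_one_iff_adj.mpr hadj
        omega
      have hvw : H.dist v w = H.dist v u + 1 := by omega
      have hsub : (univ.filter (fun x => H.dist v w < H.dist v x)) ⊆
          (univ.filter (fun x => H.dist v u < H.dist v x)) := by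
        intro x hx
        simp only [Finset.mem_filter] at *
        exact ⟨hx.1, by omega⟩
      have hss : (univ.filter (fun x => H.dist v w < H.dist v x)) ⊂
          (univ.filter (fun x => H.dist v u < H.dist v x)) := by
        rw [Finset.ssubset_iff_of_subset hsub]
        refine ⟨w, ?_, ?_⟩
        · simp only [Finset.mem_filter]
          exact ⟨Finset.mem_univ w, by omega⟩
        · simp only [Finset.mem_filter]
          rintro ⟨-, h⟩
          omega
      obtain ⟨u', hmd', heq⟩ := ih _ (hm ▸ Finset.card_lt_card hss) w rfl
      refine ⟨u', hmd', ?_⟩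
      have t1 : H.dist u u' ≤ H.dist u w + H.dist w u' := hH.dist_triangle
      have t2 : H.dist v u' ≤ H.dist v u + H.dist u u' := hH.dist_triangle
      have huw : H.dist u w = 1 := SimpleGraph.dist_eq_one_iff_adj.mpr hadj
      omega

lemma exists_mmd_resolvers [Fintype β] (hH : H.Connected) {u v : β} (h : u ≠ v) :
    ∃ u' v', u' ≠ v' ∧ MutuallyMaximallyDistant H u' v' ∧
      StronglyResolves H u' u v ∧ StronglyResolves H v' u v := by
  obtain ⟨u', hu'md, hu'⟩ := exists_md hH v u
  obtain ⟨v', hv'md, hv'⟩ := exists_md hH u' v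
  have hpos : 0 < H.dist v u := hH.pos_dist_of_ne (Ne.symm h)
  have h1 : 0 < H.dist v u' := by omega
  have hu'v : u' ≠ v := by
    intro e; subst e; rw [SimpleGraph.dist_self] at h1; omega
  have hposu'v : 0 < H.dist u' v := hH.pos_dist_of_ne hu'v
  have h2 : 0 < H.dist u' v' := by omega
  have hne : u' ≠ v' := by
    intro e; subst e; rw [SimpleGraph.dist_self] at h2; omega
  have c1 : H.dist u' v = H.dist v u' := SimpleGraph.dist_comm
  have c2 : H.dist v' v = H.dist v v' := SimpleGraph.dist_comm
  have c3 : H.dist u' u = H.dist u u' := SimpleGraph.dist_comm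
  have c4 : H.dist u' v' = H.dist v' u' := SimpleGraph.dist_comm
  have c5 : H.dist u v = H.dist v u := SimpleGraph.dist_comm
  have c6 : H.dist v' u = H.dist u v' := SimpleGraph.dist_comm
  refine ⟨u', v', hne, ⟨?_, hv'md⟩, ?_, ?_⟩
  · intro w hadj
    have t1 : H.dist v' w ≤ H.dist v' v + H.dist v w := hH.dist_triangle
    have t2 : H.dist v w ≤ H.dist u' v := hu'md w hadj
    omega
  · right; omega
  · left
    have t1 : H.dist u' v' ≤ H.dist u' u + H.dist u v' := hH.dist_triangle
    have t2 : H.dist u v' ≤ H.dist u v + H.dist v v' := hH.dist_triangle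
    omega

lemma cover_generator [Fintype β] (hH : H.Connected) {C : Finset β}
    (hc : ∀ b d : β, b ≠ d → MutuallyMaximallyDistant H b d → b ∈ C ∨ d ∈ C) :
    IsStrongMetricGenerator H C := by
  intro u v huv
  obtain ⟨u', v', hne, hmmd, hr1, hr2⟩ := exists_mmd_resolvers hH huv
  rcases hc u' v' hne hmmd with h | h
  · exact ⟨u', h, hr1⟩
  · exact ⟨v', h, hr2⟩

lemma md_not_resolved (hH : H.Connected) {b d w : β}
    (hmd : MaximallyDistantFrom H d b) (hw : w ≠ d) :
    H.dist w b ≠ H.dist w d + H.dist d b := by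
  intro heq
  have hc3 : H.dist w d = H.dist d w := SimpleGraph.dist_comm
  have hpos : 0 < H.dist w d := hH.pos_dist_of_ne hw
  obtain ⟨p, hp⟩ := (hH d w).exists_walk_length_eq_dist
  cases p with
  | nil => exact hw rfl
  | cons hadj q =>
    rename_i d'
    rw [SimpleGraph.Walk.length_cons] at hp
    have f1 : H.dist d' w ≤ q.length := SimpleGraph.dist_le q
    have f2 : H.dist b d' ≤ H.dist d b := hmd d' hadj
    have f3 : H.dist w b ≤ H.dist w d' + H.dist d' b := hH.dist_triangle
    have c1 : H.dist w d' = H.dist d' w := SimpleGraph.dist_comm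
    have c2 : H.dist d' b = H.dist b d' := SimpleGraph.dist_comm
    omega

end H

-- AUX PART 2: distance in strongProd ⊤ H

def spHomSnd (H : SimpleGraph β) (a : α) : H →g strongProd (⊤ : SimpleGraph α) H :=
  ⟨fun y => (a, y), fun {b c} h =>
    ⟨fun e => h.ne (congrArg Prod.snd e), Or.inl rfl, Or.inr h⟩⟩

section SP
variable {H : SimpleGraph β}

lemma sp_walk_lower (hH : H.Connected) :
    ∀ (u v : α × β) (p : (strongProd (⊤ : SimpleGraph α) H).Walk u v),
      H.dist u.2 v.2 ≤ p.length := by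
  intro u v p
  induction p with
  | nil => rw [SimpleGraph.dist_self]; exact Nat.zero_le _
  | @cons a b' c hadj q ih =>
    obtain ⟨-, -, h2⟩ := hadj
    show H.dist a.2 c.2 ≤ q.length + 1
    rcases h2 with he | ha
    · rw [he]; omega
    · have ht : H.dist a.2 c.2 ≤ H.dist a.2 b'.2 + H.dist b'.2 c.2 := hH.dist_triangle
      have h1 : H.dist a.2 b'.2 = 1 := SimpleGraph.dist_eq_one_iff_adj.mpr ha
      omega

lemma sp_walk_lower1 {u v : α × β}
    (p : (strongProd (⊤ : SimpleGraph α) H).Walk u v) (h : u.1 ≠ v.1) :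
    1 ≤ p.length := by
  rcases Nat.eq_zero_or_pos p.length with h0 | h1
  · exact absurd (congrArg Prod.fst (SimpleGraph.Walk.eq_of_length_eq_zero h0)) h
  · exact h1

lemma sp_walk_exists [DecidableEq α] (hH : H.Connected) (a c : α) (b d : β) :
    ∃ p : (strongProd (⊤ : SimpleGraph α) H).Walk (a, b) (c, d),
      p.length = max (if a = c then 0 else 1) (H.dist b d) := by
  obtain ⟨q, hq⟩ := (hH b d).exists_walk_length_eq_dist
  by_cases hac : a = c
  · subst hac
    refine ⟨q.map (spHomSnd H a), ?_⟩
    exact (SimpleGraph.Walk.length_map (spHomSnd H a) q).trans (by rw [hq, if_pos rfl]; simp)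
  · cases q with
    | nil =>
      have hadj1 : (strongProd (⊤ : SimpleGraph α) H).Adj (a, b) (c, b) :=
        ⟨fun e => hac (congrArg Prod.fst e), Or.inr (by simp [hac]), Or.inl rfl⟩
      refine ⟨SimpleGraph.Walk.cons hadj1 SimpleGraph.Walk.nil, ?_⟩
      rw [SimpleGraph.Walk.length_cons, SimpleGraph.Walk.length_nil,
        SimpleGraph.dist_self, if_neg hac]
      rfl
    | cons hadj q' =>
      rename_i y
      have hadj1 : (strongProd (⊤ : SimpleGraph α) H).Adj (a, b) (c, y) :=
        ⟨fun e => hac (congrArg Prod.fst e), Or.inr (by simp [hac]), Or.inr hadj⟩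
      refine ⟨SimpleGraph.Walk.cons hadj1 (q'.map (spHomSnd H c)), ?_⟩
      show (q'.map (spHomSnd H c)).length + 1 = _
      rw [SimpleGraph.Walk.length_map]
      rw [SimpleGraph.Walk.length_cons] at hq
      have h1 : 1 ≤ H.dist b d := by omega
      rw [if_neg hac]
      have h2 : max 1 (H.dist b d) = H.dist b d := Nat.max_eq_right h1
      omega

lemma sp_dist [DecidableEq α] (hH : H.Connected) (a c : α) (b d : β) :
    (strongProd (⊤ : SimpleGraph α) H).dist (a, b) (c, d) =
      max (if a = c then 0 else 1) (H.dist b d) := by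
  obtain ⟨p, hp⟩ := sp_walk_exists hH a c b d
  refine le_antisymm (hp ▸ SimpleGraph.dist_le p) ?_
  obtain ⟨p', hp'⟩ := SimpleGraph.Reachable.exists_walk_length_eq_dist ⟨p⟩
  rw [← hp']
  refine max_le ?_ (sp_walk_lower hH _ _ p')
  by_cases hac : a = c
  · rw [if_pos hac]; exact Nat.zero_le _
  · rw [if_neg hac]
    exact sp_walk_lower1 p' hac

end SP

theorem sdim_strongProd_complete [Fintype β] (n₁ : ℕ) (hn : 2 ≤ n₁)
    (H : SimpleGraph β) (hH : H.Connected) (hHn : Nontrivial β) :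
    sdim (strongProd (⊤ : SimpleGraph (Fin n₁)) H) =
      Fintype.card β * (n₁ - 1) + n₁ * sdim H - (n₁ - 1) * sdim H := by
  classical
  -- distance helpers
  have hd1 : ∀ (x x' : Fin n₁) (y : β),
      (strongProd (⊤ : SimpleGraph (Fin n₁)) H).dist (x, y) (x', y) =
        if x = x' then 0 else 1 := by
    intro x x' y
    rw [sp_dist hH, SimpleGraph.dist_self]
    exact Nat.max_eq_left (Nat.zero_le _)
  have hd2 : ∀ (x x' : Fin n₁) (y y' : β), y ≠ y' →
      (strongProd (⊤ : SimpleGraph (Fin n₁)) H).dist (x, y) (x', y') = H.dist y y' := by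
    intro x x' y y' hyy
    rw [sp_dist hH]
    have := hH.pos_dist_of_ne hyy
    apply Nat.max_eq_right
    split <;> omega
  have hd3 : ∀ (x : Fin n₁) (y y' : β),
      (strongProd (⊤ : SimpleGraph (Fin n₁)) H).dist (x, y) (x, y') = H.dist y y' := by
    intro x y y'
    by_cases hyy : y = y'
    · subst hyy; rw [SimpleGraph.dist_self, SimpleGraph.dist_self]
    · exact hd2 x x y y' hyy
  -- upper bound
  have upper : sdim (strongProd (⊤ : SimpleGraph (Fin n₁)) H) ≤
      Fintype.card β * (n₁ - 1) + sdim H := by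
    obtain ⟨SH, hSHgen, hSHcard⟩ := sdim_exists H
    set a₀ : Fin n₁ := ⟨0, by omega⟩ with ha₀
    set SU : Finset (Fin n₁ × β) :=
      ((Finset.univ.erase a₀) ×ˢ Finset.univ) ∪ ({a₀} ×ˢ SH) with hSU
    have hmem : ∀ x y, (x, y) ∈ SU ↔ x ≠ a₀ ∨ y ∈ SH := by
      intro x y
      simp only [hSU, Finset.mem_union, Finset.mem_product, Finset.mem_erase,
        Finset.mem_univ, Finset.mem_singleton, and_true, true_and]
      tauto
    have hdisj : Disjoint ((Finset.univ.erase a₀) ×ˢ (Finset.univ : Finset β))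
        ({a₀} ×ˢ SH) := by
      rw [Finset.disjoint_left]
      rintro ⟨x, y⟩ hx hy
      rw [Finset.mem_product] at hx hy
      exact (Finset.ne_of_mem_erase hx.1) (Finset.mem_singleton.mp hy.1)
    have hScard : SU.card = (n₁ - 1) * Fintype.card β + sdim H := by
      rw [hSU, Finset.card_union_of_disjoint hdisj, Finset.card_product, Finset.card_product,
        Finset.card_erase_of_mem (Finset.mem_univ _), Finset.card_univ, Finset.card_univ,
        Fintype.card_fin, Finset.card_singleton, hSHcard, Nat.one_mul]
    have hSgen : IsStrongMetricGenerator (strongProd (⊤ : SimpleGraph (Fin n₁)) H) SU := by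
      rintro ⟨a, b⟩ ⟨c, d⟩ hne
      by_cases hbd : b = d
      · subst hbd
        have hac : a ≠ c := fun e => hne (by rw [e])
        by_cases ha : a = a₀
        · have hc : c ≠ a₀ := fun e => hac (ha.trans e.symm)
          refine ⟨(c, b), (hmem c b).mpr (Or.inl hc), Or.inl ?_⟩
          rw [hd1, hd1]
          simp [Ne.symm hac]
        · refine ⟨(a, b), (hmem a b).mpr (Or.inl ha), Or.inr ?_⟩
          rw [hd1, hd1]
          simp [hac]
      · obtain ⟨w, hwS, hres⟩ := hSHgen b d hbd
        have hdb : 0 < H.dist d b := hH.pos_dist_of_ne (Ne.symm hbd)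
        have hbd' : 0 < H.dist b d := hH.pos_dist_of_ne hbd
        rcases hres with h | h
        · have hwb : w ≠ b := by
            intro e; subst e; rw [SimpleGraph.dist_self] at h; omega
          refine ⟨(c, w), (hmem c w).mpr (Or.inr hwS), Or.inl ?_⟩
          rw [hd2 c a w b hwb, hd3 c w d, hd2 c a d b (Ne.symm hbd)]
          exact h
        · have hwd : w ≠ d := by
            intro e; subst e; rw [SimpleGraph.dist_self] at h; omega
          refine ⟨(a, w), (hmem a w).mpr (Or.inr hwS), Or.inr ?_⟩
          rw [hd2 a c w d hwd, hd3 a w b, hd2 a c b d hbd]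
          exact h
    calc sdim (strongProd (⊤ : SimpleGraph (Fin n₁)) H) ≤ SU.card := sdim_le _ hSgen
      _ = Fintype.card β * (n₁ - 1) + sdim H := by rw [hScard, Nat.mul_comm]
  -- lower bound
  have lower : Fintype.card β * (n₁ - 1) + sdim H ≤
      sdim (strongProd (⊤ : SimpleGraph (Fin n₁)) H) := by
    obtain ⟨SL, hSLgen, hSLcard⟩ := sdim_exists (strongProd (⊤ : SimpleGraph (Fin n₁)) H)
    have hcol : ∀ (y : β) (x x' : Fin n₁), (x, y) ∉ SL → (x', y) ∉ SL → x = x' := by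
      intro y x x' hx hx'
      by_contra hxx
      obtain ⟨⟨z, w⟩, hW, hres⟩ := hSLgen (x, y) (x', y)
        (fun e => hxx (congrArg Prod.fst e))
      by_cases hwy : w = y
      · subst hwy
        by_cases hzx : z = x
        · exact hx (hzx ▸ hW)
        by_cases hzx' : z = x'
        · exact hx' (hzx' ▸ hW)
        rcases hres with h | h
        · rw [hd1, hd1, hd1, if_neg hzx, if_neg hzx', if_neg (Ne.symm hxx)] at h
          omega
        · rw [hd1, hd1, hd1, if_neg hzx', if_neg hzx, if_neg hxx] at h
          omega
      · rcases hres with h | h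
        · rw [hd2 z x w y hwy, hd2 z x' w y hwy, hd1, if_neg (Ne.symm hxx)] at h
          omega
        · rw [hd2 z x' w y hwy, hd2 z x w y hwy, hd1, if_neg hxx] at h
          omega
    set B : Finset β := Finset.univ.filter (fun y => ∃ x, (x, y) ∉ SL) with hB
    have h1 : SLᶜ.card ≤ B.card := by
      apply Finset.card_le_card_of_injOn Prod.snd
      · rintro ⟨x, y⟩ hp
        simp only [Finset.coe_compl, Set.mem_compl_iff, Finset.mem_coe, Finset.mem_compl] at hp
        rw [Finset.mem_coe, hB, Finset.mem_filter]
        exact ⟨Finset.mem_univ y, x, hp⟩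
      · rintro ⟨x, y⟩ hp ⟨x', y'⟩ hp' he
        rw [Finset.mem_coe, Finset.mem_compl] at hp hp'
        cases he
        exact Prod.ext (hcol y x x' hp hp') rfl
    have h2 : SLᶜ.card = n₁ * Fintype.card β - SL.card := by
      rw [Finset.card_compl, Fintype.card_prod, Fintype.card_fin]
    have hSLle : SL.card ≤ n₁ * Fintype.card β := by
      have := Finset.card_le_univ SL
      rwa [Fintype.card_prod, Fintype.card_fin] at this
    have hcov : ∀ b d : β, b ≠ d → MutuallyMaximallyDistant H b d → b ∈ Bᶜ ∨ d ∈ Bᶜ := by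
      intro b d hbd hmmd
      by_contra hcon
      push_neg at hcon
      obtain ⟨hb', hd'⟩ := hcon
      rw [Finset.mem_compl, not_not, hB, Finset.mem_filter] at hb' hd'
      obtain ⟨x, hx⟩ := hb'.2
      obtain ⟨x', hx'⟩ := hd'.2
      obtain ⟨⟨z, w⟩, hW, hres⟩ := hSLgen (x, b) (x', d)
        (fun e => hbd (congrArg Prod.snd e))
      have hdb : 0 < H.dist d b := hH.pos_dist_of_ne (Ne.symm hbd)
      have hbd' : 0 < H.dist b d := hH.pos_dist_of_ne hbd
      by_cases hwb : w = b
      · subst hwb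
        by_cases hzx : z = x
        · exact hx (hzx ▸ hW)
        rcases hres with h | h
        · rw [hd1, hd2 z x' w d hbd, hd2 x' x d w (Ne.symm hbd), if_neg hzx] at h
          omega
        · rw [hd2 z x' w d hbd, hd1, hd2 x x' w d hbd, if_neg hzx] at h
          omega
      · by_cases hwd : w = d
        · subst hwd
          by_cases hzx' : z = x'
          · exact hx' (hzx' ▸ hW)
          rcases hres with h | h
          · rw [hd2 z x w b hwb, hd1, hd2 x' x w b hwb, if_neg hzx'] at h
            omega
          · rw [hd1, hd2 z x w b hwb, hd2 x x' b w hbd, if_neg hzx'] at h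
            have hcm : H.dist w b = H.dist b w := SimpleGraph.dist_comm
            omega
        · rcases hres with h | h
          · rw [hd2 z x w b hwb, hd2 z x' w d hwd, hd2 x' x d b (Ne.symm hbd)] at h
            exact md_not_resolved hH hmmd.2 hwd h
          · rw [hd2 z x' w d hwd, hd2 z x w b hwb, hd2 x x' b d hbd] at h
            exact md_not_resolved hH hmmd.1 hwb h
    have hCgen : IsStrongMetricGenerator H Bᶜ := cover_generator hH hcov
    have h3 : sdim H ≤ Bᶜ.card := sdim_le _ hCgen
    have h4 : Bᶜ.card = Fintype.card β - B.card := Finset.card_compl B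
    have h5 : B.card ≤ Fintype.card β := Finset.card_le_univ B
    have hmul : n₁ * Fintype.card β = Fintype.card β * (n₁ - 1) + Fintype.card β := by
      obtain ⟨m, rfl⟩ : ∃ m, n₁ = m + 1 := ⟨n₁ - 1, by omega⟩
      simp only [Nat.add_sub_cancel]
      ring
    omega
  have hk : n₁ * sdim H = (n₁ - 1) * sdim H + sdim H := by
    obtain ⟨m, rfl⟩ : ∃ m, n₁ = m + 1 := ⟨n₁ - 1, by omega⟩
    simp only [Nat.add_sub_cancel]
    ring
  omega
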